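/- Let κ, t, ℓ be positive integers with ℓ < t and 16t ≤ κ, and set λ = (κ−ℓ)/t and γ = λ^{−ℓ/(2t)} (real powers). Then 1 − γ − 2ℓ/κ ≥ ℓ/(8t). -/

import Mathlib

/-- For positive integers `κ, t, ℓ` with `ℓ < t` and `16t ≤ κ`, setting `λ = (κ−ℓ)/t` and
`γ = λ^(−ℓ/(2t))` (real powers), we have `1 − γ − 2ℓ/κ ≥ ℓ/(8t)`. -/
theorem stmt_11 (κ t ℓ : ℕ) (hℓ : 0 < ℓ) (hlt : ℓ < t) (htκ : 16 * t ≤ κ)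
    (lam γ : ℝ)
    (hlam : lam = ((κ : ℝ) - ℓ) / t)
    (hγ : γ = lam ^ (-(ℓ : ℝ) / (2 * t))) :
    (ℓ : ℝ) / (8 * t) ≤ 1 - γ - 2 * ℓ / κ := by
  have ht : (0:ℝ) < t := by exact_mod_cast hℓ.trans hlt
  have hℓR : (0:ℝ) < ℓ := by exact_mod_cast hℓ
  have hℓt : (ℓ:ℝ) < t := by exact_mod_cast hlt
  have hκR : (16:ℝ) * t ≤ κ := by exact_mod_cast htκ
  have hκ : (0:ℝ) < κ := by nlinarith
  have hlam15 : (15:ℝ) ≤ lam := by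
    rw [hlam, le_div_iff₀ ht]
    nlinarith
  have hlam_pos : 0 < lam := by linarith
  have hlog : 1 ≤ Real.log lam := by
    rw [Real.le_log_iff_exp_le hlam_pos]
    have := Real.exp_one_lt_d9
    linarith
  set a : ℝ := (ℓ:ℝ) / (2 * t) * Real.log lam with ha
  have ha0 : 0 < a := by
    apply mul_pos (by positivity)
    linarith
  have hγe : γ = Real.exp (-a) := by
    rw [hγ, Real.rpow_def_of_pos hlam_pos, ha]
    ring_nf
  have hγle : γ ≤ 1 / (1 + a) := by
    rw [hγe, Real.exp_neg]
    rw [one_div]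
    apply inv_anti₀ (by linarith)
    exact Real.add_one_le_exp a |>.trans_eq' (by ring)
  -- a ≥ ℓ/(2t)
  have haℓ : (ℓ:ℝ) / (2 * t) ≤ a := by
    nlinarith [mul_le_mul_of_nonneg_left hlog (le_of_lt (show (0:ℝ) < (ℓ:ℝ)/(2*t) by positivity))]
  have h1 : γ ≤ 1 / (1 + (ℓ:ℝ) / (2 * t)) := by
    refine hγle.trans ?_
    apply div_le_div_of_nonneg_left (by norm_num) (by positivity) (by linarith)
  have h2 : 2 * (ℓ:ℝ) / κ ≤ (ℓ:ℝ) / (8 * t) := by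
    rw [div_le_div_iff₀ hκ (by positivity)]
    nlinarith
  have h3 : 1 / (1 + (ℓ:ℝ) / (2 * t)) ≤ 1 - (ℓ:ℝ) / (4 * t) := by
    rw [div_le_iff₀ (by positivity)]
    have ht2 : (0:ℝ) < t * t := by positivity
    field_simp
    nlinarith
  have h5 : (ℓ:ℝ) / (4 * t) = (ℓ:ℝ) / (8 * t) + (ℓ:ℝ) / (8 * t) := by
    field_simp
    ring
  linarith
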